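/- Let Q be a finite quiver with no loops and at most one arrow between any two vertices (counting both directions), such that the underlying simple graph of Q is acyclic. If ω and ω′ are two paths in the double quiver Q̄ with the same source i and the same target j, then W(ω) = W(ω′); in other words, W descends to a well-defined integer W(i, j) depending only on the endpoints. -/

import Mathlib

open Quiver

/-- The underlying simple graph of a quiver: `i` and `j` are adjacent iff they are
distinct and there is an arrow `i ⟶ j` or an arrow `j ⟶ i`. -/
def quiverGraph (V : Type*) [Quiver V] : SimpleGraph V where
  Adj a b := a ≠ b ∧ (Nonempty (a ⟶ b) ∨ Nonempty (b ⟶ a))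
  symm := ⟨fun _ _ h => ⟨h.1.symm, h.2.symm⟩⟩
  loopless := ⟨fun _ h => h.1 rfl⟩

/-- The weight of an arrow of the double quiver `Q̄ = Symmetrify V`:
`-1` for an original arrow `α ∈ Q₁` and `+1` for a reversed arrow `α* ∈ Q₁*`. -/
def edgeWeight {V : Type*} [Quiver V] {a b : Symmetrify V} (e : a ⟶ b) : ℤ :=
  match e with
  | Sum.inl _ => -1
  | Sum.inr _ => 1

/-- The weight `W(ω)` of a path `ω` in the double quiver `Q̄`:
the sum of the weights of its arrows. -/
def pathWeight {V : Type*} [Quiver V] :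
    ∀ {a b : Symmetrify V}, Path a b → ℤ
  | _, _, Path.nil => 0
  | _, _, Path.cons p e => pathWeight p + edgeWeight e
/-- Direction-sensitive weight of an (oriented) edge of the underlying graph. -/
noncomputable def gWeight {V : Type*} [Quiver V] (a b : V) : ℤ :=
  @ite _ (Nonempty (a ⟶ b)) (Classical.dec _) (-1) 1

/-- Weight of a walk in the underlying graph. -/
noncomputable def walkWeight {V : Type*} [Quiver V] :
    ∀ {a b : V}, (quiverGraph V).Walk a b → ℤ
  | _, _, SimpleGraph.Walk.nil => 0
  | a, _, SimpleGraph.Walk.cons (v := c) _ w => gWeight a c + walkWeight w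

theorem walkWeight_append {V : Type*} [Quiver V] {a b c : V}
    (w : (quiverGraph V).Walk a b) (w' : (quiverGraph V).Walk b c) :
    walkWeight (w.append w') = walkWeight w + walkWeight w' := by
  induction w with
  | nil => simp [walkWeight]
  | cons h p ih => simp [walkWeight, ih]; ring

theorem gWeight_antisymm {V : Type*} [Quiver V]
    (hsingle : ∀ a b : V, Subsingleton ((a ⟶ b) ⊕ (b ⟶ a)))
    {a b : V} (h : (quiverGraph V).Adj a b) :
    gWeight b a = - gWeight a b := by
  rcases h.2 with hf | hf <;> obtain ⟨f⟩ := hf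
  · have hnb : ¬ Nonempty (b ⟶ a) := by
      rintro ⟨f'⟩
      have := (hsingle a b).elim (Sum.inl f) (Sum.inr f')
      simp at this
    rw [gWeight, gWeight, if_neg hnb, if_pos (Nonempty.intro f)]
    norm_num
  · have hnb : ¬ Nonempty (a ⟶ b) := by
      rintro ⟨f'⟩
      have := (hsingle a b).elim (Sum.inl f') (Sum.inr f)
      simp at this
    rw [gWeight, gWeight, if_neg hnb, if_pos (Nonempty.intro f)]

/-- Any arrow of the symmetrification gives an adjacency. -/
theorem adj_of_hom {V : Type*} [Quiver V] (hloops : ∀ a : V, IsEmpty (a ⟶ a))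
    {a b : Symmetrify V} (e : a ⟶ b) :
    (quiverGraph V).Adj a b := by
  rcases e with f | f
  · refine ⟨?_, Or.inl ⟨f⟩⟩
    rintro rfl; exact (hloops a).elim f
  · refine ⟨?_, Or.inr ⟨f⟩⟩
    rintro rfl; exact (hloops a).elim f

theorem edgeWeight_eq {V : Type*} [inst : Quiver V]
    (hsingle : ∀ a b : V, Subsingleton ((a ⟶ b) ⊕ (b ⟶ a)))
    {a b : Symmetrify V} (e : a ⟶ b) :
    edgeWeight e = gWeight (V := V) a b := by
  rcases e with f | f
  · rw [edgeWeight]; unfold gWeight; rw [if_pos (Nonempty.intro f)]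
  · have hnb : ¬ Nonempty (@Quiver.Hom V inst a b) := by
      rintro ⟨f'⟩
      have := (hsingle a b).elim (Sum.inl f') (Sum.inr f)
      simp at this
    rw [edgeWeight]; unfold gWeight; rw [if_neg hnb]

/-- Turn a path in the symmetrification into a walk in the underlying graph. -/
noncomputable def toWalk {V : Type*} [Quiver V] (hloops : ∀ a : V, IsEmpty (a ⟶ a)) :
    ∀ {a b : Symmetrify V}, Path a b → (quiverGraph V).Walk a b
  | _, _, Path.nil => SimpleGraph.Walk.nil
  | _, _, Path.cons p e => (toWalk hloops p).concat (adj_of_hom hloops e)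

theorem pathWeight_eq_walkWeight {V : Type*} [Quiver V]
    (hloops : ∀ a : V, IsEmpty (a ⟶ a))
    (hsingle : ∀ a b : V, Subsingleton ((a ⟶ b) ⊕ (b ⟶ a)))
    {a b : Symmetrify V} (p : Path a b) :
    pathWeight p = walkWeight (toWalk hloops p) := by
  induction p with
  | nil => simp [pathWeight, toWalk, walkWeight]
  | cons p e ih =>
    rw [pathWeight, toWalk]
    erw [SimpleGraph.Walk.concat_eq_append, walkWeight_append, ih,
      edgeWeight_eq hsingle]
    simp [walkWeight]

/-- Uniqueness of paths, stated for walks. -/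
theorem path_unique' {V : Type*} [Quiver V] (hacyclic : (quiverGraph V).IsAcyclic)
    {v w : V} {p q : (quiverGraph V).Walk v w} (hp : p.IsPath) (hq : q.IsPath) : p = q :=
  Subtype.mk_eq_mk.mp (hacyclic.path_unique ⟨p, hp⟩ ⟨q, hq⟩)

/-- The key lemma: in an acyclic graph, any walk has the same weight as any path
with the same endpoints. -/
theorem walkWeight_eq_of_isPath {V : Type*} [Quiver V]
    (hsingle : ∀ a b : V, Subsingleton ((a ⟶ b) ⊕ (b ⟶ a)))
    (hacyclic : (quiverGraph V).IsAcyclic)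
    {a b : V} (w : (quiverGraph V).Walk a b) :
    ∀ p : (quiverGraph V).Walk a b, p.IsPath → walkWeight w = walkWeight p := by
  classical
  induction w with
  | nil =>
    intro p hp
    have : p = SimpleGraph.Walk.nil := path_unique' hacyclic hp SimpleGraph.Walk.IsPath.nil
    rw [this]
  | @cons a c b h w ih =>
    intro p hp
    obtain ⟨q, hq, hwq⟩ : ∃ q : (quiverGraph V).Walk c b, q.IsPath ∧ walkWeight w = walkWeight q :=
      ⟨w.toPath, w.toPath.2, ih _ w.toPath.2⟩
    by_cases hmem : a ∈ q.support
    · have hsplit : (q.takeUntil a hmem).append (q.dropUntil a hmem) = q :=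
        q.take_spec hmem
      have h1 : (q.takeUntil a hmem).IsPath := hq.takeUntil hmem
      have h2 : (q.dropUntil a hmem).IsPath := hq.dropUntil hmem
      have h3 : q.takeUntil a hmem = SimpleGraph.Walk.cons h.symm SimpleGraph.Walk.nil :=
        path_unique' hacyclic h1 (SimpleGraph.Path.singleton h.symm).2
      have htw : walkWeight (q.takeUntil a hmem) = gWeight c a := by
        rw [h3]; simp [walkWeight]
      have h4 : q.dropUntil a hmem = p := path_unique' hacyclic h2 hp
      have hqw : walkWeight q = gWeight c a + walkWeight p := by
        rw [← hsplit, walkWeight_append, htw, h4]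
      rw [walkWeight, hwq, hqw, gWeight_antisymm hsingle h]
      ring
    · have hcons : (SimpleGraph.Walk.cons h q).IsPath := hq.cons hmem
      have heq : SimpleGraph.Walk.cons h q = p := path_unique' hacyclic hcons hp
      rw [walkWeight, hwq, ← heq, walkWeight]

/-- Let `Q` be a finite quiver with no loops and at most one arrow
between any two vertices (counting both directions), whose underlying simple graph is
acyclic.  If `ω` and `ω′` are two paths in the double quiver `Q̄` with the same source
and the same target, then `W(ω) = W(ω′)`: the weight `W` depends only on the
endpoints. -/
theorem pathWeight_well_defined
    (V : Type*) [Quiver V] [Fintype V] [∀ a b : V, Fintype (a ⟶ b)]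
    (hloops : ∀ a : V, IsEmpty (a ⟶ a))
    (hsingle : ∀ a b : V, Subsingleton ((a ⟶ b) ⊕ (b ⟶ a)))
    (hacyclic : (quiverGraph V).IsAcyclic)
    (i j : Symmetrify V) (ω ω' : Path i j) :
    pathWeight ω = pathWeight ω' := by
  classical
  rw [pathWeight_eq_walkWeight hloops hsingle, pathWeight_eq_walkWeight hloops hsingle]
  set w := toWalk hloops ω with hw
  set w' := toWalk hloops ω' with hw'
  rw [walkWeight_eq_of_isPath hsingle hacyclic w w.toPath w.toPath.2,
    walkWeight_eq_of_isPath hsingle hacyclic w' w.toPath w.toPath.2]
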